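/- arXiv:math/0310002 — 2 statements merged into one kernel-verified Lean document; each statement's English description precedes it below -/
import Mathlib

section
/- Let X be a compact metric space with a finite Borel measure ν, S ⊆ X a finite set, and u : X → ℝ a function satisfying u(x) ≥ A·log(dist(x,S)) − B for some constants A, B > 0 and all x ∈ X, and u ≤ 0. If there exist constants C, such that ν(B(S,r)) ≤ C·r² for all r ≥ 0 (where B(S,r) is the r-neighborhood of S), then |u| is ν-integrable. -/
open MeasureTheory Metric Filter Topology Set

theorem stmt0 {X : Type*} [MetricSpace X] [CompactSpace X] [MeasurableSpace X] [BorelSpace X]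
    (ν : Measure X) [IsFiniteMeasure ν] (S : Set X) (hS : S.Finite)
    (u : X → ℝ) (hu : Measurable u)
    (A B : ℝ) (hA : 0 < A) (hB : 0 < B)
    (hlow : ∀ x, A * Real.log (Metric.infDist x S) - B ≤ u x)
    (hneg : ∀ x, u x ≤ 0)
    (C : ℝ)
    (hC : ∀ r : ℝ, 0 ≤ r → ν (Metric.thickening r S) ≤ ENNReal.ofReal (C * r ^ 2)) :
    Integrable (fun x => |u x|) ν := by
  rcases S.eq_empty_or_nonempty with rfl | hSne
  · -- S empty: infDist = 0, so u is bounded between -B and 0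
    have hbd : ∀ x, ‖|u x|‖ ≤ B := by
      intro x
      have h1 := hlow x
      simp [Real.log_zero] at h1
      rw [Real.norm_eq_abs, abs_abs, abs_of_nonpos (hneg x)]
      linarith
    exact (integrable_const B).mono' hu.abs.aestronglyMeasurable (ae_of_all _ hbd)
  · refine ⟨hu.abs.aestronglyMeasurable, ?_⟩
    rw [hasFiniteIntegral_iff_ofReal (ae_of_all _ fun x => abs_nonneg _)]
    rw [lintegral_eq_lintegral_meas_lt ν (ae_of_all _ fun x => abs_nonneg _)
      hu.abs.aemeasurable]
    have key : ∀ t ∈ Ioi (0:ℝ), ν {a : X | t < |u a|} ≤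
        ENNReal.ofReal ((C * Real.exp (2 * B / A)) * Real.exp (-(2 / A) * t)) := by
      intro t ht
      have ht' : (0:ℝ) < t := ht
      have hsub : {a : X | t < |u a|} ⊆ Metric.thickening (Real.exp ((B - t) / A)) S := by
        intro a ha
        have hua : t < |u a| := ha
        rw [abs_of_nonpos (hneg a)] at hua
        have h1 : A * Real.log (Metric.infDist a S) < B - t := by
          have := hlow a; linarith
        have h2 : Real.log (Metric.infDist a S) < (B - t) / A := by
          rw [lt_div_iff₀ hA] at *; linarith [mul_comm A (Real.log (Metric.infDist a S))]
        rw [Metric.mem_thickening_iff_infDist_lt hSne]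
        rcases eq_or_lt_of_le (Metric.infDist_nonneg (x := a) (s := S)) with h | h
        · rw [← h]; exact Real.exp_pos _
        · exact (Real.log_lt_iff_lt_exp h).mp h2
      calc ν {a : X | t < |u a|} ≤ ν (Metric.thickening (Real.exp ((B - t) / A)) S) :=
            measure_mono hsub
        _ ≤ ENNReal.ofReal (C * Real.exp ((B - t) / A) ^ 2) :=
            hC _ (Real.exp_pos _).le
        _ = ENNReal.ofReal ((C * Real.exp (2 * B / A)) * Real.exp (-(2 / A) * t)) := by
            congr 1
            rw [← Real.exp_nat_mul, mul_assoc, ← Real.exp_add]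
            congr 1
            field_simp
            ring
    calc ∫⁻ t in Ioi (0:ℝ), ν {a : X | t < |u a|}
        ≤ ∫⁻ t in Ioi (0:ℝ),
            ENNReal.ofReal ((C * Real.exp (2 * B / A)) * Real.exp (-(2 / A) * t)) :=
          setLIntegral_mono' measurableSet_Ioi key
      _ < ⊤ := by
          have hint : IntegrableOn
              (fun t => (C * Real.exp (2 * B / A)) * Real.exp (-(2 / A) * t))
              (Ioi (0:ℝ)) := by
            exact (exp_neg_integrableOn_Ioi 0 (by positivity : (0:ℝ) < 2 / A)).const_mul _
          exact hint.setLIntegral_lt_top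
end

section
/- Let H be a real inner product space with inner product E(·,·) and seminorm |u| = E(u,u)^{1/2}. Suppose (uⱼ) is a sequence in H such that for all k ≥ j: E(uⱼ,uⱼ) ≤ E(uⱼ,u_k) + εⱼₖ and E(uⱼ,u_k) ≤ E(u_k,u_k) + εⱼₖ, where εⱼₖ → 0 as j,k → ∞, and suppose (|uⱼ|) is bounded. Then (uⱼ) is a Cauchy sequence in the seminorm |·|. -/
open Filter Topology

theorem stmt6 {H : Type*} [AddCommGroup H] [Module ℝ H]
    (E : H →ₗ[ℝ] H →ₗ[ℝ] ℝ)
    (hsymm : ∀ u v, E u v = E v u) (hpsd : ∀ u, 0 ≤ E u u)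
    (u : ℕ → H) (ε : ℕ → ℕ → ℝ)
    (hε : Tendsto (fun p : ℕ × ℕ => ε p.1 p.2) atTop (nhds 0))
    (h1 : ∀ j k, j ≤ k → E (u j) (u j) ≤ E (u j) (u k) + ε j k)
    (h2 : ∀ j k, j ≤ k → E (u j) (u k) ≤ E (u k) (u k) + ε j k)
    (M : ℝ) (hM : ∀ j, Real.sqrt (E (u j) (u j)) ≤ M) :
    Tendsto (fun p : ℕ × ℕ => Real.sqrt (E (u p.1 - u p.2) (u p.1 - u p.2)))
      atTop (nhds 0) := by
  set a : ℕ → ℝ := fun j => E (u j) (u j) with ha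
  have hMnn : 0 ≤ M := le_trans (Real.sqrt_nonneg _) (hM 0)
  have haM : ∀ j, a j ≤ M ^ 2 := by
    intro j
    have h := hM j
    nlinarith [Real.sq_sqrt (hpsd (u j)), Real.sqrt_nonneg (E (u j) (u j))]
  have hexp : ∀ j k, E (u j - u k) (u j - u k) = a j - 2 * E (u j) (u k) + a k := by
    intro j k
    simp only [map_sub, LinearMap.sub_apply, ha]
    rw [hsymm (u k) (u j)]
    ring
  have key : Tendsto (fun p : ℕ × ℕ => E (u p.1 - u p.2) (u p.1 - u p.2))
      atTop (nhds 0) := by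
    rw [Metric.tendsto_nhds]
    intro δ hδ
    have hδ' : 0 < δ / 6 := by linarith
    have hev := (Metric.tendsto_nhds.mp hε) (δ / 6) hδ'
    rw [eventually_atTop] at hev
    obtain ⟨N, hN⟩ := hev
    set N0 : ℕ := max N.1 N.2 with hN0
    have hεsmall : ∀ j k, N0 ≤ j → N0 ≤ k → |ε j k| < δ / 6 := by
      intro j k hj hk
      have := hN (j, k) ⟨le_trans (le_max_left _ _) hj, le_trans (le_max_right _ _) hk⟩
      simpa [Real.dist_eq] using this
    -- supremum of the tail
    have hbdd : BddAbove (Set.range fun n => a (n + N0)) := by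
      refine ⟨M ^ 2, ?_⟩
      rintro x ⟨n, rfl⟩
      exact haM _
    set s : ℝ := ⨆ n, a (n + N0) with hs
    have hle_s : ∀ k, N0 ≤ k → a k ≤ s := by
      intro k hk
      have := le_ciSup hbdd (k - N0)
      rwa [Nat.sub_add_cancel hk] at this
    have hlt : s - δ / 6 < ⨆ n, a (n + N0) := by rw [← hs]; linarith
    obtain ⟨i, hi⟩ := exists_lt_of_lt_ciSup hlt
    set j0 : ℕ := i + N0 with hj0
    have hj0N : N0 ≤ j0 := Nat.le_add_left _ _
    have hij0 : s - δ / 6 < a j0 := hi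
    -- core bound for j ≤ k with j0 ≤ j, j0 ≤ k
    have core : ∀ j k, j0 ≤ j → j0 ≤ k → j ≤ k →
        E (u j - u k) (u j - u k) < δ := by
      intro j k hj hk hjk
      have hjN : N0 ≤ j := le_trans hj0N hj
      have hkN : N0 ≤ k := le_trans hj0N hk
      have hε1 := hεsmall j k hjN hkN
      have hε2 := hεsmall j0 j hj0N hjN
      have hA := h1 j k hjk
      -- a j0 ≤ a j + 2 * ε j0 j
      have hB := h1 j0 j hj
      have hC := h2 j0 j hj
      have hajs : s - 3 * (δ / 6) < a j := by
        have h3 : a j0 ≤ a j + 2 * ε j0 j := by linarith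
        have := abs_lt.mp hε2
        linarith
      have haks : a k ≤ s := hle_s k hkN
      have h4 := (abs_lt.mp hε1).2
      rw [hexp]
      nlinarith
    rw [eventually_atTop]
    refine ⟨(j0, j0), ?_⟩
    rintro ⟨j, k⟩ ⟨hj, hk⟩
    simp only [Real.dist_eq, sub_zero]
    rw [abs_of_nonneg (hpsd _)]
    rcases le_total j k with h | h
    · exact core j k hj hk h
    · have heq : (E (u j - u k)) (u j - u k) = (E (u k - u j)) (u k - u j) := by
        simp only [map_sub, LinearMap.sub_apply]
        rw [hsymm (u j) (u k)]
        ring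
      rw [heq]
      exact core k j hk hj h
  have hsq : Tendsto Real.sqrt (nhds 0) (nhds 0) := by
    simpa using (Real.continuous_sqrt.tendsto 0)
  exact hsq.comp key
end
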